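/- Let F be a variable convex CNF with convexity ordering σ, let π be a prefix of σ, and call a clause c var(π)-active if var(c) intersects both var(π) and var(F)∖var(π). Then for any two var(π)-active clauses c and c', the sets var(c)∩var(π) and var(c')∩var(π) are comparable under inclusion (one contains the other). -/

import Mathlib

abbrev Var := ℕ
abbrev Lit := Var × Bool
abbrev Clause := Finset Lit
abbrev CNF := Finset Clause

def varsClause (c : Clause) : Finset Var := c.image Prod.fst
def varsCNF (F : CNF) : Finset Var := F.sup varsClause
def sizeCNF (F : CNF) : ℕ := ∑ c ∈ F, c.card

def satClauseOn (X : Finset Var) (f : Var → Bool) (c : Clause) : Prop :=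
  ∃ l ∈ c, l.1 ∈ X ∧ f l.1 = l.2

instance (X : Finset Var) (f : Var → Bool) : DecidablePred (satClauseOn X f) := fun c => by
  unfold satClauseOn; infer_instance

def restrict (F : CNF) (X : Finset Var) (f : Var → Bool) : CNF :=
  (F.filter (fun c => ¬ satClauseOn X f c)).image (fun c => c.filter (fun l => l.1 ∉ X))

def st (F : CNF) (X : Finset Var) : Set CNF := { G | ∃ f : Var → Bool, G = restrict F X f }

noncomputable def stw (F : CNF) (σ : List Var) : ℕ :=
  (Finset.Icc 1 σ.length).sup fun i => (st F ((σ.take i).toFinset)).ncard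

def satCNF (F : CNF) (f : Var → Bool) : Prop := ∀ c ∈ F, ∃ l ∈ c, f l.1 = l.2

structure OBDD (σ : List Var) where
  size : ℕ
  label : Fin size → (Fin σ.length) ⊕ Bool
  succ : Fin size → Bool → Fin size
  source : Fin size
  ordered : ∀ v i, label v = Sum.inl i → ∀ b j, label (succ v b) = Sum.inl j → i < j

def OBDD.evalAux {σ : List Var} (D : OBDD σ) (f : Var → Bool) : ℕ → Fin D.size → Bool
  | 0, v => match D.label v with | .inr b => b | .inl _ => false
  | n+1, v => match D.label v with
    | .inr b => b
    | .inl i => D.evalAux f n (D.succ v (f (σ.get i)))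

def OBDD.eval {σ : List Var} (D : OBDD σ) (f : Var → Bool) : Bool :=
  D.evalAux f (σ.length + 1) D.source

def OBDD.computes {σ : List Var} (D : OBDD σ) (F : CNF) : Prop :=
  ∀ f : Var → Bool, D.eval f = true ↔ satCNF F f

/-- σ witnesses left convexity of the incidence graph of F (variable convexity). -/
def ConvexWitness (F : CNF) (σ : List Var) : Prop :=
  ∀ c ∈ F, ∀ v ∈ varsClause c, ∀ v' ∈ varsClause c, ∀ v'' ∈ σ.toFinset,
    σ.idxOf v < σ.idxOf v'' → σ.idxOf v'' < σ.idxOf v' → v'' ∈ varsClause c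


lemma mem_take_iff_aux (σ : List Var) (hnd : σ.Nodup) (i : ℕ) (v : Var) :
    v ∈ σ.take i ↔ v ∈ σ ∧ σ.idxOf v < i := by
  constructor
  · intro h
    obtain ⟨j, hj, hje⟩ := List.mem_iff_getElem.1 h
    have hjlen : j < σ.length := by simp at hj; omega
    have hji : j < i := by simp at hj; omega
    have : σ[j] = v := by rw [← hje]; exact List.getElem_take.symm
    have hidx : σ.idxOf v = j := by
      rw [← this]; exact hnd.idxOf_getElem j hjlen
    refine ⟨?_, by omega⟩
    rw [← this]; exact List.getElem_mem hjlen
  · rintro ⟨hm, hlt⟩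
    have hl : σ.idxOf v < σ.length := List.idxOf_lt_length_iff.2 hm
    have hlen : σ.idxOf v < (σ.take i).length := by simp; omega
    have : (σ.take i)[σ.idxOf v] = v := by
      rw [List.getElem_take]; exact List.getElem_idxOf hl
    rw [← this]; exact List.getElem_mem hlen

/-- for var(π)-active clauses c, c' of a variable convex CNF,
the sets var(c)∩var(π) and var(c')∩var(π) are comparable under inclusion. -/
theorem convex_active_clauses_comparable (F : CNF) (σ : List Var)
    (hnd : σ.Nodup) (hv : σ.toFinset = varsCNF F) (hconv : ConvexWitness F σ)
    (i : ℕ) (hi : i ≤ σ.length)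
    (c c' : Clause) (hc : c ∈ F) (hc' : c' ∈ F)
    (hact : (varsClause c ∩ (σ.take i).toFinset).Nonempty ∧
            (varsClause c \ (σ.take i).toFinset).Nonempty)
    (hact' : (varsClause c' ∩ (σ.take i).toFinset).Nonempty ∧
             (varsClause c' \ (σ.take i).toFinset).Nonempty) :
    varsClause c ∩ (σ.take i).toFinset ⊆ varsClause c' ∩ (σ.take i).toFinset ∨
      varsClause c' ∩ (σ.take i).toFinset ⊆ varsClause c ∩ (σ.take i).toFinset := by
  classical
  set π := (σ.take i).toFinset with hπ
  have hmem : ∀ v, v ∈ π ↔ v ∈ σ ∧ σ.idxOf v < i := by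
    intro v; rw [hπ, List.mem_toFinset]; exact mem_take_iff_aux σ hnd i v
  have key : ∀ (d : Clause), d ∈ F → (varsClause d \ π).Nonempty →
      ∀ v ∈ varsClause d ∩ π, ∀ w, w ∈ σ →
      σ.idxOf v ≤ σ.idxOf w → σ.idxOf w < i → w ∈ varsClause d ∩ π := by
    intro d hd hdiff v hvmem w hwσ hle hwi
    obtain ⟨u, hu⟩ := hdiff
    rw [Finset.mem_sdiff] at hu
    have hvC : v ∈ varsClause d := (Finset.mem_inter.1 hvmem).1
    have hvπ : v ∈ π := (Finset.mem_inter.1 hvmem).2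
    have hvσ : v ∈ σ := ((hmem v).1 hvπ).1
    have huσ : u ∈ σ := by
      have : u ∈ varsCNF F := Finset.mem_sup.2 ⟨d, hd, hu.1⟩
      rw [← hv] at this; exact List.mem_toFinset.1 this
    have hui : ¬ σ.idxOf u < i := by
      intro hlt; exact hu.2 ((hmem u).2 ⟨huσ, hlt⟩)
    have hwπ : w ∈ π := (hmem w).2 ⟨hwσ, hwi⟩
    rcases eq_or_lt_of_le hle with heq | hlt
    · have : w = v := (List.idxOf_inj hwσ).1 heq.symm
      subst this; exact Finset.mem_inter.2 ⟨hvC, hwπ⟩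
    · have hwC : w ∈ varsClause d := by
        apply hconv d hd v hvC u hu.1 w (List.mem_toFinset.2 hwσ) hlt
        omega
      exact Finset.mem_inter.2 ⟨hwC, hwπ⟩
  obtain ⟨v, hvA, hvmin⟩ := Finset.exists_min_image (varsClause c ∩ π)
    (fun x => σ.idxOf x) hact.1
  obtain ⟨v', hvA', hvmin'⟩ := Finset.exists_min_image (varsClause c' ∩ π)
    (fun x => σ.idxOf x) hact'.1
  rcases le_total (σ.idxOf v) (σ.idxOf v') with h | h
  · right
    intro w hw
    have hwπ : w ∈ π := (Finset.mem_inter.1 hw).2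
    have hwσ : w ∈ σ := ((hmem w).1 hwπ).1
    have hwi : σ.idxOf w < i := ((hmem w).1 hwπ).2
    exact key c hc hact.2 v hvA w hwσ (le_trans h (hvmin' w hw)) hwi
  · left
    intro w hw
    have hwπ : w ∈ π := (Finset.mem_inter.1 hw).2
    have hwσ : w ∈ σ := ((hmem w).1 hwπ).1
    have hwi : σ.idxOf w < i := ((hmem w).1 hwπ).2
    exact key c' hc' hact'.2 v' hvA' w hwσ (le_trans h (hvmin w hw)) hwi
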